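/- Let K be a field, G a totally ordered abelian group, S a proper submonoid of G_{≥0}, and a ∈ G_{≥0} \ S. Suppose that for every g ∈ G with 2g ≠ a, exactly one of g ∈ S and a−g ∈ S holds (where membership in S for g ∉ G_{≥0} is interpreted as false, i.e., g ∈ S ⇔ a−g ∉ S for elements representable). Then the generalized power series ring D = [[K^S]] is maximal with respect to excluding the element X^a: for every z in the quotient field of D with z ∉ D, one has X^a ∈ D[z]. -/

import Mathlib

variable {Γ : Type*} [AddCommGroup Γ] [LinearOrder Γ] [IsOrderedAddMonoid Γ] {K : Type*} [Field K]

/-- The generalized power series ring `[[K^S]]`: the subring of the Hahn series field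
`HahnSeries Γ K` consisting of series with support contained in the submonoid `S`. -/
def hahnSubring (K : Type*) [Field K] (S : AddSubmonoid Γ) : Subring (HahnSeries Γ K) where
  carrier := {f | ∀ g : Γ, f.coeff g ≠ 0 → g ∈ S}
  zero_mem' := by intro g hg; simp at hg
  one_mem' := by
    intro g hg
    rw [HahnSeries.coeff_one] at hg
    by_cases h : g = 0
    · exact h ▸ S.zero_mem
    · simp [h] at hg
  add_mem' := by
    intro a b ha hb g hg
    rw [HahnSeries.coeff_add] at hg
    by_cases h : a.coeff g = 0
    · exact hb g (by intro h'; rw [h, h'] at hg; simp at hg)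
    · exact ha g h
  neg_mem' := by
    intro a ha g hg
    rw [HahnSeries.coeff_neg] at hg
    exact ha g (by simpa using hg)
  mul_mem' := by
    intro a b ha hb g hg
    obtain ⟨i, hi, j, hj, rfl⟩ :=
      HahnSeries.support_mul_subset ((HahnSeries.mem_support _ _).mpr hg)
    exact S.add_mem (ha i hi) (hb j hj)

/-- If `p` is a nonzero element of the closure with order exactly `a`, and every `g > a`
lies in `S`, then `X^a` lies in the closure. -/
lemma aux_key (S : AddSubmonoid Γ) (a : Γ) (hgt : ∀ g : Γ, a < g → g ∈ S)
    (z p : HahnSeries Γ K)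
    (hp : p ∈ Subring.closure (insert z (hahnSubring K S : Set (HahnSeries Γ K))))
    (hpne : p ≠ 0) (hord : p.order = a) :
    HahnSeries.single a (1 : K) ∈
      Subring.closure (insert z (hahnSubring K S : Set (HahnSeries Γ K))) := by
  set u : K := p.coeff a with hu_def
  have hu : u ≠ 0 := by
    have := HahnSeries.coeff_order_eq_zero.not.2 hpne
    rwa [hord] at this
  have hDsub : (hahnSubring K S : Set (HahnSeries Γ K)) ⊆
      Subring.closure (insert z (hahnSubring K S : Set (HahnSeries Γ K))) :=
    fun x hx => Subring.subset_closure (Set.mem_insert_of_mem _ hx)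
  set d : HahnSeries Γ K := p - HahnSeries.single a u with hd_def
  have hdD : d ∈ hahnSubring K S := by
    intro g hg
    rcases lt_trichotomy g a with hlt | rfl | hgt'
    · exfalso
      apply hg
      have h1 : p.coeff g = 0 := HahnSeries.coeff_eq_zero_of_lt_order (hord ▸ hlt)
      have h2 : (HahnSeries.single a u).coeff g = 0 :=
        HahnSeries.coeff_single_of_ne (ne_of_lt hlt)
      simp [hd_def, h1, h2]
    · exfalso
      apply hg
      simp [hd_def, hu_def, HahnSeries.coeff_single_same]
    · exact hgt g hgt'
  have hsingle : HahnSeries.single a u = p - d := by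
    simp [hd_def]
  have hCu : HahnSeries.single (0 : Γ) u⁻¹ ∈ hahnSubring K S := by
    intro g hg
    by_cases h : g = 0
    · exact h ▸ S.zero_mem
    · exact absurd (HahnSeries.coeff_single_of_ne h) hg
  have heq : HahnSeries.single a (1 : K)
      = HahnSeries.single (0 : Γ) u⁻¹ * HahnSeries.single a u := by
    rw [HahnSeries.single_mul_single, zero_add, inv_mul_cancel₀ hu]
  rw [heq, hsingle]
  exact mul_mem (hDsub hCu) (sub_mem hp (hDsub hdD))

/-- **Theorem 3.4, (2) ⇒ (1).**
Let `S` be a proper submonoid of the nonnegative cone of a totally ordered abelian group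
`Γ` and `a ≥ 0` with `a ∉ S`.  Suppose that for every `g` with `2g ≠ a`, exactly one of
`g ∈ S` and `a - g ∈ S` holds.  Then, assuming `D = [[K^S]]` has the same quotient field
as `V = [[K^{Γ≥0}]]`, the ring `D` is maximal with respect to excluding `X^a`: for every
element `z = f/g` of the quotient field of `D` with `z ∉ D`, one has `X^a ∈ D[z]`. -/
theorem hahnSubring_symmetry_maximal_excluding
    (S : AddSubmonoid Γ) (hS : S ≤ AddSubmonoid.nonneg Γ)
    (hproper : S ≠ AddSubmonoid.nonneg Γ)
    (a : Γ) (ha0 : 0 ≤ a) (haS : a ∉ S)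
    (hsym : ∀ g : Γ, g + g ≠ a → (g ∈ S ↔ a - g ∉ S))
    (hfrac : ∀ x : HahnSeries Γ K,
      (∃ f g : HahnSeries Γ K, f ∈ hahnSubring K (AddSubmonoid.nonneg Γ) ∧
          g ∈ hahnSubring K (AddSubmonoid.nonneg Γ) ∧ g ≠ 0 ∧ x = f / g) ↔
      (∃ f g : HahnSeries Γ K, f ∈ hahnSubring K S ∧ g ∈ hahnSubring K S ∧
          g ≠ 0 ∧ x = f / g)) :
    ∀ z : HahnSeries Γ K,
      (∃ f g : HahnSeries Γ K, f ∈ hahnSubring K S ∧ g ∈ hahnSubring K S ∧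
          g ≠ 0 ∧ z = f / g) →
      z ∉ hahnSubring K S →
      HahnSeries.single a (1 : K) ∈
        Subring.closure (insert z (hahnSubring K S : Set (HahnSeries Γ K))) := by
  intro z _ hzD
  -- every g > a is in S
  have hgt : ∀ g : Γ, a < g → g ∈ S := by
    intro g hg
    have hne2 : (a - g) + (a - g) ≠ a := by
      have h1 : a - g < 0 := sub_neg.mpr hg
      have : (a - g) + (a - g) < 0 := add_neg h1 h1
      exact ne_of_lt (lt_of_lt_of_le this ha0)
    have h1 : a - g ∉ S := by
      intro h
      have := hS h
      rw [AddSubmonoid.mem_nonneg] at this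
      exact absurd (sub_nonneg.mp this) (not_le.mpr hg)
    have hiff := hsym (a - g) hne2
    rw [sub_sub_cancel] at hiff
    by_contra hgS
    exact h1 (hiff.mpr hgS)
  -- find b = minimal element of support of z not in S
  have hex : ∃ g : Γ, z.coeff g ≠ 0 ∧ g ∉ S := by
    by_contra h
    push_neg at h
    exact hzD fun g hg => h g hg
  set T : Set Γ := {g | z.coeff g ≠ 0 ∧ g ∉ S} with hT_def
  have hTsub : T ⊆ z.support := fun g hg => hg.1
  have hTwf : T.IsWF := z.isWF_support.mono hTsub
  have hTne : T.Nonempty := hex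
  set b : Γ := hTwf.min hTne with hb_def
  have hbT : b ∈ T := hTwf.min_mem hTne
  have hbz : z.coeff b ≠ 0 := hbT.1
  have hbS : b ∉ S := hbT.2
  -- w : tail of z from b on
  set w : HahnSeries Γ K :=
    { coeff := fun g => if b ≤ g then z.coeff g else 0
      isPWO_support' := z.isPWO_support'.mono (by
        intro g hg
        simp only [Function.mem_support] at hg ⊢
        by_cases h : b ≤ g
        · simpa [h] using hg
        · simp [h] at hg) } with hw_def
  have hwb : w.coeff b = z.coeff b := by simp [hw_def]
  have hwlt : ∀ g : Γ, g < b → w.coeff g = 0 := by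
    intro g hg
    simp [hw_def, not_le.mpr hg]
  have hwne : w ≠ 0 := by
    intro h
    apply hbz
    rw [← hwb, h, HahnSeries.coeff_zero]
  have hword : w.order = b := by
    apply le_antisymm
    · exact HahnSeries.order_le_of_coeff_ne_zero (hwb ▸ hbz)
    · by_contra h
      exact HahnSeries.coeff_order_eq_zero.not.2 hwne (hwlt _ (not_le.mp h))
  -- z - w ∈ D
  have hzwD : z - w ∈ hahnSubring K S := by
    intro g hg
    rw [HahnSeries.coeff_sub] at hg
    by_cases h : b ≤ g
    · exfalso; apply hg; simp [hw_def, h]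
    · have hco : z.coeff g ≠ 0 := by
        rw [hwlt g (not_le.mp h), sub_zero] at hg
        exact hg
      by_contra hgS
      exact absurd (hTwf.min_le hTne ⟨hco, hgS⟩) h
  -- w ∈ closure
  have hzcl : z ∈ Subring.closure (insert z (hahnSubring K S : Set (HahnSeries Γ K))) :=
    Subring.subset_closure (Set.mem_insert _ _)
  have hwcl : w ∈ Subring.closure (insert z (hahnSubring K S : Set (HahnSeries Γ K))) := by
    have : w = z - (z - w) := by ring
    rw [this]
    exact sub_mem hzcl (Subring.subset_closure (Set.mem_insert_of_mem _ hzwD))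
  by_cases hcase : b + b = a
  · -- p = w * w
    refine aux_key S a hgt z (w * w) (mul_mem hwcl hwcl) (mul_ne_zero hwne hwne) ?_
    rw [HahnSeries.order_mul hwne hwne, hword, hcase]
  · -- a - b ∈ S, p = X^(a-b) * w
    have hcS : a - b ∈ S := by
      by_contra h
      exact hbS ((hsym b hcase).mpr h)
    have hsingleD : HahnSeries.single (a - b) (1 : K) ∈ hahnSubring K S := by
      intro g hg
      by_cases h : g = a - b
      · exact h ▸ hcS
      · exact absurd (HahnSeries.coeff_single_of_ne h) hg
    refine aux_key S a hgt z (HahnSeries.single (a - b) 1 * w)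
      (mul_mem (Subring.subset_closure (Set.mem_insert_of_mem _ hsingleD)) hwcl)
      (mul_ne_zero (HahnSeries.single_ne_zero one_ne_zero) hwne) ?_
    rw [HahnSeries.order_mul (HahnSeries.single_ne_zero one_ne_zero) hwne,
      HahnSeries.order_single one_ne_zero, hword, sub_add_cancel]
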